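/- A pre-gap (a_α, b_α)_{α<ω₁} is a gap (no infinite c splits it) if and only if for every uncountable Γ ⊆ ω₁ there exist α < β in Γ with a_α ∩ b_β ≠ ∅. -/

import Mathlib

noncomputable section

/-- The set of countable ordinals, i.e. ordinals below `ω₁`. -/
abbrev Omega1 : Type 1 := {o : Ordinal // o < (Cardinal.aleph 1).ord}

/-- `(a_α, b_α)_{α<ω₁}` is a pre-gap. -/
def PreGap (a b : Omega1 → Set ℕ) : Prop :=
  (∀ α, (a α).Infinite) ∧ (∀ α, (b α).Infinite) ∧
  (∀ α, a α ∩ b α = ∅) ∧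
  (∀ α β : Omega1, α < β → (a α \ a β).Finite ∧ (b α \ b β).Finite) ∧
  (∀ δ γ : Omega1, (a δ ∩ b γ).Finite)

/-- `c` splits (fills) the pre-gap: `a_α ⊆* c` and `b_α ∩ c` finite for all `α`. -/
def Splits (c : Set ℕ) (a b : Omega1 → Set ℕ) : Prop :=
  c.Infinite ∧ ∀ α, (a α \ c).Finite ∧ (b α ∩ c).Finite

/-- A gap is a pre-gap which no infinite `c` splits. -/
def IsGap (a b : Omega1 → Set ℕ) : Prop :=
  PreGap a b ∧ ¬ ∃ c : Set ℕ, Splits c a b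

open Cardinal in
lemma om1_uncountable : ¬ (Set.univ : Set Omega1).Countable := by
  intro h
  have h2 : #Omega1 ≤ Cardinal.aleph0 := by
    rw [← Cardinal.le_aleph0_iff_set_countable, Cardinal.mk_univ] at h
    exact h
  have heq : #Omega1 = Cardinal.lift.{1, 0} (Cardinal.aleph 1) := by
    have h1 : #Omega1 = #(Set.Iio ((Cardinal.aleph 1).ord)) := rfl
    rw [h1, Ordinal.mk_Iio_ordinal, Cardinal.card_ord]
  rw [heq] at h2
  have h3 : Cardinal.lift.{1,0} (Cardinal.aleph 1) ≤ Cardinal.lift.{1,0} Cardinal.aleph0 := by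
    rwa [Cardinal.lift_aleph0]
  exact absurd (Cardinal.lift_le.mp h3) (not_le.mpr Cardinal.aleph0_lt_aleph_one)

open Cardinal in
lemma countable_Iic (s : Omega1) : {β : Omega1 | β ≤ s}.Countable := by
  have hcard : #(Set.Iio (Order.succ s.1)) ≤ Cardinal.aleph0 := by
    rw [Ordinal.mk_Iio_ordinal, Ordinal.card_succ]
    have hs : s.1.card < Cardinal.aleph 1 := Cardinal.lt_ord.mp s.2
    have hle : s.1.card ≤ Cardinal.aleph0 := by
      have h2 : s.1.card < Order.succ Cardinal.aleph0 := by rwa [Cardinal.succ_aleph0]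
      exact Order.lt_succ_iff.mp h2
    have h1 : s.1.card + 1 ≤ Cardinal.aleph0 := by
      calc s.1.card + 1 ≤ Cardinal.aleph0 + Cardinal.aleph0 :=
            add_le_add hle Cardinal.one_le_aleph0
        _ = Cardinal.aleph0 := Cardinal.aleph0_add_aleph0
    calc Cardinal.lift.{1,0} (s.1.card + 1) ≤ Cardinal.lift.{1,0} Cardinal.aleph0 :=
          Cardinal.lift_le.mpr h1
      _ = Cardinal.aleph0 := Cardinal.lift_aleph0
  have hc : Countable (Set.Iio (Order.succ s.1)) := Cardinal.mk_le_aleph0_iff.mp hcard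
  have hinj : Function.Injective (fun β : {β : Omega1 | β ≤ s} =>
      (⟨β.1.1, lt_of_le_of_lt β.2 (Order.lt_succ s.1)⟩ : Set.Iio (Order.succ s.1))) := by
    intro x y hxy
    simp only [Subtype.mk.injEq] at hxy
    exact Subtype.ext (Subtype.ext (by have h := congrArg Subtype.val hxy; exact h))
  exact Set.countable_coe_iff.mp hinj.countable

lemma exists_upper {Γ : Set Omega1} (hΓ : ¬ Γ.Countable) {S : Set Omega1} (hS : S.Countable) :
    ∃ δ ∈ Γ, ∀ s ∈ S, s < δ := by
  have hT : (⋃ s ∈ S, {β : Omega1 | β ≤ s}).Countable := hS.biUnion (fun s _ => countable_Iic s)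
  have hns : ¬ Γ ⊆ ⋃ s ∈ S, {β | β ≤ s} := fun hsub => hΓ (hT.mono hsub)
  obtain ⟨δ, hδΓ, hδ⟩ := Set.not_subset.mp hns
  refine ⟨δ, hδΓ, fun s hs => ?_⟩
  by_contra hle
  exact hδ (Set.mem_biUnion hs (not_lt.mp hle))

/-- A pre-gap is a gap iff every uncountable `Γ` contains `α < β` with `a_α ∩ b_β ≠ ∅`. -/
theorem stmt2 (a b : Omega1 → Set ℕ) (hpre : PreGap a b) :
    IsGap a b ↔
      ∀ Γ : Set Omega1, ¬ Γ.Countable →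
        ∃ α ∈ Γ, ∃ β ∈ Γ, α < β ∧ a α ∩ b β ≠ ∅ := by
  classical
  obtain ⟨hainf, hbinf, hdisj, hmono, hfin⟩ := hpre
  constructor
  · -- gap → condition
    intro hgap Γ hΓ
    by_contra hcon
    push_neg at hcon
    -- hcon : ∀ α ∈ Γ, ∀ β ∈ Γ, α < β → a α ∩ b β = ∅
    apply hgap.2
    set c : Set ℕ := {x | ∃ α ∈ Γ, x ∈ a α} with hc
    obtain ⟨α₀, hα₀, -⟩ := exists_upper hΓ (Set.countable_empty)
    refine ⟨c, ?_, fun γ => ⟨?_, ?_⟩⟩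
    · exact (hainf α₀).mono (fun x hx => ⟨α₀, hα₀, hx⟩)
    · -- a γ \ c finite
      obtain ⟨δ, hδΓ, hδ⟩ := exists_upper hΓ (Set.countable_singleton γ)
      have hγδ : γ < δ := hδ γ rfl
      refine ((hmono γ δ hγδ).1).subset ?_
      rintro x ⟨hxa, hxc⟩
      exact ⟨hxa, fun hxd => hxc ⟨δ, hδΓ, hxd⟩⟩
    · -- b γ ∩ c finite
      have hch : ∀ x : ℕ, ∃ δ : Omega1, δ ∈ Γ ∧ (x ∈ c → x ∈ a δ) := by
        intro x
        by_cases hx : x ∈ c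
        · obtain ⟨α, hα, hxa⟩ := hx
          exact ⟨α, hα, fun _ => hxa⟩
        · exact ⟨α₀, hα₀, fun h => absurd h hx⟩
      choose f hf1 hf2 using hch
      obtain ⟨δ, hδΓ, hδ⟩ := exists_upper hΓ
        ((Set.countable_range f).union (Set.countable_singleton γ))
      have hγδ : γ < δ := hδ γ (Or.inr rfl)
      refine ((hmono γ δ hγδ).2).subset ?_
      rintro x ⟨hxb, hxc⟩
      refine ⟨hxb, fun hxd => ?_⟩
      have hflt : f x < δ := hδ (f x) (Or.inl ⟨x, rfl⟩)
      have : x ∈ a (f x) ∩ b δ := ⟨hf2 x hxc, hxd⟩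
      rw [hcon (f x) (hf1 x) δ hδΓ hflt] at this
      exact this
  · -- condition → gap
    intro hrhs
    refine ⟨⟨hainf, hbinf, hdisj, hmono, hfin⟩, ?_⟩
    rintro ⟨c, hcinf, hcs⟩
    have hN : ∀ α : Omega1, ∃ n : ℕ, ∀ x ∈ (a α \ c) ∪ (b α ∩ c), x < n := by
      intro α
      obtain ⟨m, hm⟩ := (((hcs α).1).union ((hcs α).2)).bddAbove
      exact ⟨m + 1, fun x hx => Nat.lt_succ_of_le (hm hx)⟩
    choose n hn using hN
    set g : Omega1 → ℕ × Finset ℕ × Finset ℕ := fun α =>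
      (n α, (Finset.range (n α)).filter (· ∈ a α), (Finset.range (n α)).filter (· ∈ b α))
      with hg
    have hfib : ∃ y, ¬ (g ⁻¹' {y}).Countable := by
      by_contra hcnt
      push_neg at hcnt
      apply om1_uncountable
      have huniv : (Set.univ : Set Omega1) = ⋃ y, g ⁻¹' {y} := by
        ext α
        simp only [Set.mem_univ, Set.mem_iUnion, Set.mem_preimage, Set.mem_singleton_iff,
          true_iff]
        exact ⟨g α, rfl⟩
      rw [huniv]
      exact Set.countable_iUnion hcnt
    obtain ⟨y, hy⟩ := hfib
    obtain ⟨α, hα, β, hβ, hαβ, hne⟩ := hrhs _ hy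
    obtain ⟨x, hxa, hxb⟩ := Set.nonempty_iff_ne_empty.mpr hne
    have hgeq : g α = g β := by
      have h1 : g α = y := hα
      have h2 : g β = y := hβ
      rw [h1, h2]
    have hnn : n α = n β := congrArg Prod.fst hgeq
    by_cases hx : x < n α
    · have h1 : x ∈ (Finset.range (n α)).filter (· ∈ a α) := by
        rw [Finset.mem_filter, Finset.mem_range]
        exact ⟨hx, hxa⟩
      have heqf : (Finset.range (n α)).filter (· ∈ a α)
          = (Finset.range (n β)).filter (· ∈ a β) :=
        congrArg (fun p => p.2.1) hgeq
      rw [heqf, Finset.mem_filter] at h1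
      have : x ∈ a β ∩ b β := ⟨h1.2, hxb⟩
      rw [hdisj β] at this
      exact this
    · have hxc : x ∈ c := by
        by_contra hxc
        exact hx (hn α x (Or.inl ⟨hxa, hxc⟩))
      have : x < n β := hn β x (Or.inr ⟨hxb, hxc⟩)
      rw [← hnn] at this
      exact hx this
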